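/- Let T be an invertible column-stochastic n×n matrix and ψ(C) = ⟨A,C⟩/⟨B,C⟩ with ⟨B,C⟩ > 0 on C_D. If for some γ ∈ R and classifier g it holds that g minimizes the linear noisy-corrected loss, i.e., ⟨(Tᵀ)^{-1}(A − γB), C^{D̃}[g]⟩ = inf_{C̃ ∈ C_{D̃}} ⟨(Tᵀ)^{-1}(A − γB), C̃⟩, then g minimizes ⟨A − γB, C⟩ over C ∈ C_D; moreover ψ(C^D[g]) ≤ γ if and only if inf_{C ∈ C_D} ⟨A − γB, C⟩ ≤ 0. -/
import Mathlib


/-- Frobenius inner product of matrices. -/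
def frob {n : ℕ} (A B : Matrix (Fin n) (Fin n) ℝ) : ℝ := ∑ i, ∑ j, A i j * B i j

lemma frob_eq_trace {n : ℕ} (A B : Matrix (Fin n) (Fin n) ℝ) :
    frob A B = (A.transpose * B).trace := by
  simp only [frob, Matrix.trace, Matrix.diag, Matrix.mul_apply, Matrix.transpose_apply]
  exact Finset.sum_comm ..

lemma frob_mul_left {n : ℕ} (T X C : Matrix (Fin n) (Fin n) ℝ) :
    frob X (T * C) = frob (T.transpose * X) C := by
  rw [frob_eq_trace, frob_eq_trace, Matrix.transpose_mul, Matrix.transpose_transpose, Matrix.mul_assoc]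

lemma frob_sub_smul {n : ℕ} (A B C : Matrix (Fin n) (Fin n) ℝ) (γ : ℝ) :
    frob (A - γ • B) C = frob A C - γ * frob B C := by
  simp only [frob, Matrix.sub_apply, Matrix.smul_apply, smul_eq_mul, sub_mul,
    Finset.sum_sub_distrib, Finset.mul_sum]
  ring_nf

/-- Correctness of a noise-corrected bisection step: if `g` minimizes the noise-corrected
linear loss `(Tᵀ)⁻¹(A − γB)` over the noisy feasible set, then `g` minimizes `⟨A − γB, ·⟩`
over the clean feasible set, and `ψ(C^D[g]) ≤ γ` iff `inf_{C ∈ C_D} ⟨A − γB, C⟩ ≤ 0`. -/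
theorem noise_corrected_bisection_step
    {n : ℕ} {H : Type*} (T A B : Matrix (Fin n) (Fin n) ℝ) (γ : ℝ)
    (hT : IsUnit T.det)
    (hTnn : ∀ i j, 0 ≤ T i j ∧ T i j ≤ 1) (hTcol : ∀ j, ∑ i, T i j = 1)
    (Cclean Cnoisy : H → Matrix (Fin n) (Fin n) ℝ)
    (hrel : ∀ h, Cnoisy h = T * Cclean h)
    (ψ : Matrix (Fin n) (Fin n) ℝ → ℝ) (hψ : ∀ C, ψ C = frob A C / frob B C)
    (hpos : ∀ C ∈ Set.range Cclean, 0 < frob B C)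
    (g : H)
    (hopt : frob ((T.transpose)⁻¹ * (A - γ • B)) (Cnoisy g)
      = sInf ((fun Ct => frob ((T.transpose)⁻¹ * (A - γ • B)) Ct) '' Set.range Cnoisy)) :
    frob (A - γ • B) (Cclean g)
        = sInf ((fun C => frob (A - γ • B) C) '' Set.range Cclean) ∧
      (ψ (Cclean g) ≤ γ ↔
        sInf ((fun C => frob (A - γ • B) C) '' Set.range Cclean) ≤ 0) := by
  have hTt : IsUnit T.transpose.det := by rwa [Matrix.det_transpose]
  have hcancel : T.transpose * ((T.transpose)⁻¹ * (A - γ • B)) = A - γ • B := by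
    rw [← Matrix.mul_assoc, Matrix.mul_nonsing_inv _ hTt, Matrix.one_mul]
  have hval : ∀ h, frob ((T.transpose)⁻¹ * (A - γ • B)) (Cnoisy h)
      = frob (A - γ • B) (Cclean h) := by
    intro h
    rw [hrel, frob_mul_left, hcancel]
  have hsets : ((fun Ct => frob ((T.transpose)⁻¹ * (A - γ • B)) Ct) '' Set.range Cnoisy)
      = ((fun C => frob (A - γ • B) C) '' Set.range Cclean) := by
    ext x
    constructor
    · rintro ⟨_, ⟨h, rfl⟩, rfl⟩
      exact ⟨Cclean h, ⟨h, rfl⟩, (hval h).symm⟩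
    · rintro ⟨_, ⟨h, rfl⟩, rfl⟩
      exact ⟨Cnoisy h, ⟨h, rfl⟩, hval h⟩
  have hmain : frob (A - γ • B) (Cclean g)
      = sInf ((fun C => frob (A - γ • B) C) '' Set.range Cclean) := by
    rw [← hsets, ← hopt, hval]
  refine ⟨hmain, ?_⟩
  rw [← hmain, hψ, frob_sub_smul]
  have hBpos : 0 < frob B (Cclean g) := hpos _ ⟨g, rfl⟩
  rw [div_le_iff₀ hBpos]
  constructor <;> intro h <;> linarith
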